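/- Lower bound on the relative fluctuations of the undephased heat released: for β > 0, ν₁ > 0 and ζᶜ ∈ (0, 1], with ⟨Q_C⟩ = −2ζᶜν₁ tanh(βν₁), ⟨Q_C²⟩_c = 4ζᶜν₁² − ⟨Q_C⟩², and average entropy production ⟨Σ⟩ = −β⟨Q_C⟩, one has the identity ⟨Σ⟩(⟨Q_C²⟩_c/⟨Q_C⟩² + 1) = 2βν₁ coth(βν₁), which is at least 2; consequently ⟨Q_C²⟩_c/⟨Q_C⟩² ≥ 2βν₁ coth(βν₁)/⟨Σ⟩ − 1 ≥ 2/⟨Σ⟩ − 1. -/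

import Mathlib

lemma sinh_le_mul_cosh {x : ℝ} (hx : 0 ≤ x) : Real.sinh x ≤ x * Real.cosh x := by
  have hd : ∀ t : ℝ, HasDerivAt (fun t : ℝ => t * Real.cosh t - Real.sinh t) (t * Real.sinh t) t := by
    intro t
    have h2 := ((hasDerivAt_id t).mul (Real.hasDerivAt_cosh t)).sub (Real.hasDerivAt_sinh t)
    exact h2.congr_deriv (by simp [mul_comm])
  have hmono : MonotoneOn (fun t : ℝ => t * Real.cosh t - Real.sinh t) (Set.Ici 0) := by
    apply monotoneOn_of_deriv_nonneg (convex_Ici 0)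
    · exact (Continuous.sub (continuous_id.mul Real.continuous_cosh) Real.continuous_sinh).continuousOn
    · exact fun t _ => (hd t).differentiableAt.differentiableWithinAt
    · intro t ht
      rw [(hd t).deriv]
      have ht' : 0 ≤ t := le_of_lt (by simpa using ht)
      exact mul_nonneg ht' (by simpa using Real.sinh_le_sinh.mpr ht')
  have := hmono (Set.self_mem_Ici) (Set.mem_Ici.mpr hx) hx
  simpa using this

/-- Lower bound on the relative fluctuations of the undephased heat
released: for `β > 0`, `ν₁ > 0` and `ζᶜ ∈ (0, 1]`, with `⟨Q_C⟩ = −2ζᶜν₁ tanh(βν₁)`,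
`⟨Q_C²⟩_c = 4ζᶜν₁² − ⟨Q_C⟩²` and average entropy production `⟨Σ⟩ = −β⟨Q_C⟩`, one has the
identity `⟨Σ⟩(⟨Q_C²⟩_c/⟨Q_C⟩² + 1) = 2βν₁ coth(βν₁)`, which is at least `2`; consequently
`⟨Q_C²⟩_c/⟨Q_C⟩² ≥ 2βν₁ coth(βν₁)/⟨Σ⟩ − 1 ≥ 2/⟨Σ⟩ − 1`. -/
theorem undephased_QC_relative_fluctuations_lower_bound
    (β ν₁ ζC : ℝ) (hβ : 0 < β) (hν₁ : 0 < ν₁) (hζC0 : 0 < ζC) (hζC1 : ζC ≤ 1)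
    (QC QC2 Sav : ℝ)
    (hQC : QC = -2 * ζC * ν₁ * Real.tanh (β * ν₁))
    (hQC2 : QC2 = 4 * ζC * ν₁ ^ 2 - QC ^ 2)
    (hSav : Sav = -β * QC) :
    Sav * (QC2 / QC ^ 2 + 1) = 2 * β * ν₁ * (Real.cosh (β * ν₁) / Real.sinh (β * ν₁)) ∧
      2 ≤ 2 * β * ν₁ * (Real.cosh (β * ν₁) / Real.sinh (β * ν₁)) ∧
      2 * β * ν₁ * (Real.cosh (β * ν₁) / Real.sinh (β * ν₁)) / Sav - 1 ≤ QC2 / QC ^ 2 ∧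
      2 / Sav - 1 ≤ 2 * β * ν₁ * (Real.cosh (β * ν₁) / Real.sinh (β * ν₁)) / Sav - 1 := by
  set x := β * ν₁ with hx
  have hx0 : 0 < x := mul_pos hβ hν₁
  have hs : 0 < Real.sinh x := by simpa using Real.sinh_lt_sinh.mpr hx0
  have hc : 0 < Real.cosh x := Real.cosh_pos _
  have ht : 0 < Real.tanh x := by
    rw [Real.tanh_eq_sinh_div_cosh]; positivity
  have hQCne : QC ≠ 0 := by
    rw [hQC]
    have : (0:ℝ) < 2 * ζC * ν₁ * Real.tanh x := by positivity
    intro h; nlinarith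
  have hSavpos : 0 < Sav := by
    rw [hSav, hQC]
    nlinarith [mul_pos (mul_pos (mul_pos hβ hζC0) hν₁) ht]
  have hident : Sav * (QC2 / QC ^ 2 + 1) = 2 * β * ν₁ * (Real.cosh x / Real.sinh x) := by
    rw [hQC2, hSav, hQC, Real.tanh_eq_sinh_div_cosh]
    field_simp
    ring
  have hge2 : 2 ≤ 2 * β * ν₁ * (Real.cosh x / Real.sinh x) := by
    rw [show 2 * β * ν₁ * (Real.cosh x / Real.sinh x) = 2 * (x * Real.cosh x) / Real.sinh x from by rw [hx]; ring]
    rw [le_div_iff₀ hs]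
    nlinarith [sinh_le_mul_cosh hx0.le]
  refine ⟨hident, hge2, ?_, ?_⟩
  · have : QC2 / QC ^ 2 = 2 * β * ν₁ * (Real.cosh x / Real.sinh x) / Sav - 1 := by
      rw [← hident]; field_simp; ring
    rw [this]
  · have h2 : 2 / Sav ≤ 2 * β * ν₁ * (Real.cosh x / Real.sinh x) / Sav := by gcongr
    linarith
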